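/- Under the hypotheses of the main theorem, the ultrafilter generated by ℬ equals the E-limit ultrafilter: X ⊆ λ contains some B_{α,β,Y} ∈ ℬ if and only if {i < κ : X ∩ [λ_{<i}, λ_i) ∈ U_i} ∈ E (identifying U_i with an ultrafilter on the interval [λ_{<i}, λ_i) via a bijection, or assuming each U_i concentrates on [λ_{<i}, λ_i)). -/

import Mathlib

open Cardinal Set

/-- `U` is an ultrafilter on the set of ordinals `S`. -/
def IsUltrafilterOn (S : Set Ordinal.{0}) (U : Set (Set Ordinal.{0})) : Prop :=
  (∀ A ∈ U, A ⊆ S) ∧ S ∈ U ∧ ∅ ∉ U ∧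
    (∀ A ∈ U, ∀ B ∈ U, A ∩ B ∈ U) ∧
    (∀ A ∈ U, ∀ B, A ⊆ B → B ⊆ S → B ∈ U) ∧
    (∀ A, A ⊆ S → A ∈ U ∨ S \ A ∈ U)

/-- `s` has cardinality `< μ`. -/
def cardLT (s : Set Ordinal.{0}) (μ : Cardinal.{0}) : Prop := #s < Cardinal.lift.{1,0} μ

/-- `s` has cardinality `μ`. -/
def cardEQ (s : Set Ordinal.{0}) (μ : Cardinal.{0}) : Prop := #s = Cardinal.lift.{1,0} μ


/-- `λ_{<i} = sup{λ_j : j < i}` (as an ordinal). -/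
noncomputable def lamlt (lam_ : Ordinal.{0} → Cardinal.{0}) (i : Ordinal.{0}) : Ordinal.{0} :=
  sSup ((fun j => (lam_ j).ord) '' Set.Iio i)

/-- `B_{α,β,Y} = {ζ < λ : ∃ i ∈ Y (λ_{<i} ≤ ζ < λ_i ∧ ζ ∈ A_{i,g_β(i)} ∧ ζ > f_α(i))}`. -/
def Bset (lam_ : Ordinal.{0} → Cardinal.{0}) (A : Ordinal.{0} → Ordinal.{0} → Set Ordinal.{0})
    (f g : Ordinal.{0} → Ordinal.{0} → Ordinal.{0}) (α β : Ordinal.{0})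
    (Y : Set Ordinal.{0}) : Set Ordinal.{0} :=
  {ζ | ∃ i ∈ Y, lamlt lam_ i ≤ ζ ∧ ζ < (lam_ i).ord ∧ ζ ∈ A i (g β i) ∧ f α i < ζ}


lemma bdd_of_card_lt {c : Cardinal.{0}} (hc : c.IsRegular) {s : Set Ordinal.{0}}
    (hs : s ⊆ Set.Iio c.ord) (hcard : #s < Cardinal.lift.{1,0} c) : sSup s < c.ord := by
  set o := c.ord with ho
  let e := Ordinal.ToType.mk (o := o)
  let t : Set o.ToType := {x | (e.symm x : Ordinal) ∈ s}
  have hinj : Nonempty (t ↪ s) := by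
    refine ⟨⟨fun x => ⟨(e.symm x.1 : Ordinal), x.2⟩, ?_⟩⟩
    intro x y hxy
    have h1 : (e.symm x.1 : Ordinal) = (e.symm y.1 : Ordinal) := by
      simpa using congrArg Subtype.val hxy
    exact Subtype.ext (e.symm.injective (Subtype.ext h1))
  have ht : #t < c.ord.cof := by
    rw [hc.cof_eq]
    have h1 : Cardinal.lift.{1,0} #t ≤ Cardinal.lift.{0,1} #s := Cardinal.lift_mk_le'.2 hinj
    rw [Cardinal.lift_id'.{0,1}] at h1
    exact Cardinal.lift_lt.1 (h1.trans_lt hcard)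
  have hlt : ∀ x : t, (e.symm x.1 : Ordinal) < o := fun x => (e.symm x.1).2
  have hsup : (⨆ x : t, (e.symm x.1 : Ordinal)) < o := Ordinal.iSup_lt_ord ht hlt
  refine lt_of_le_of_lt (csSup_le' ?_) hsup
  rintro ζ hζ
  have := le_ciSup (f := fun x : t => (e.symm x.1 : Ordinal))
    (Ordinal.bddAbove_range _) ⟨e ⟨ζ, hs hζ⟩, by simpa [t] using hζ⟩
  simpa using this

/-- under the hypotheses of the main theorem (with each `U_i`
concentrating on the interval `[λ_{<i}, λ_i)` and `A_{i,α} ⊆ [λ_{<i}, λ_i)`),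
the ultrafilter generated by `ℬ` equals the `E`-limit ultrafilter: `X ⊆ λ`
contains some `B_{α,β,Y}` iff `{i < κ : X ∩ [λ_{<i}, λ_i) ∈ U_i} ∈ E`. -/
theorem stmt13 (lam κ χlam χθ : Cardinal.{0})
    (lam_ θ : Ordinal.{0} → Cardinal.{0})
    (E : Set (Set Ordinal.{0})) (U : Ordinal.{0} → Set (Set Ordinal.{0}))
    (A : Ordinal.{0} → Ordinal.{0} → Set Ordinal.{0})
    (f g : Ordinal.{0} → Ordinal.{0} → Ordinal.{0})
    -- (α) κ = cf(λ) < λ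
    (hcof : lam.ord.cof = κ) (hκlt : κ < lam)
    -- (β) E is a uniform ultrafilter on κ
    (hE : IsUltrafilterOn (Set.Iio κ.ord) E)
    (hEuni : ∀ Y ∈ E, cardEQ Y κ)
    -- (γ) λ is a strong limit cardinal
    (hsl : lam.IsStrongLimit)
    -- (δ) ⟨λ_i : i < κ⟩ strictly increasing regular cardinals tending to λ
    (hreg : ∀ i < κ.ord, (lam_ i).IsRegular)
    (hmono : ∀ i j, i < j → j < κ.ord → lam_ i < lam_ j)
    (hlt : ∀ i < κ.ord, lam_ i < lam)
    (hcofinal : ∀ c < lam, ∃ i < κ.ord, c ≤ lam_ i)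
    -- (ε) U_i is a uniform ultrafilter on λ_i
    (hU : ∀ i < κ.ord, IsUltrafilterOn (Set.Ico (lamlt lam_ i) ((lam_ i).ord)) (U i))
    (hUuni : ∀ i < κ.ord, ∀ X ∈ U i, cardEQ X (lam_ i))
    -- (ζ) U_i is generated by the ⊆*-decreasing sequence ⟨A i α : α < θ i⟩
    (hAmem : ∀ i < κ.ord, ∀ α < (θ i).ord, A i α ∈ U i)
    (hAint : ∀ i < κ.ord, ∀ α < (θ i).ord, A i α ⊆ Set.Ico (lamlt lam_ i) ((lam_ i).ord))
    (hAdec : ∀ i < κ.ord, ∀ α α', α < α' → α' < (θ i).ord →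
      cardLT (A i α' \ A i α) (lam_ i))
    (hAgen : ∀ i < κ.ord, ∀ B ∈ U i, ∃ α < (θ i).ord, cardLT (A i α \ B) (lam_ i))
    -- (η) χ_λ̄ = tcf(∏ λ_i, <_E) and χ_θ̄ = tcf(∏ θ_i, <_E), witnessed by scales
    (hχlam : χlam.IsRegular) (hχθ : χθ.IsRegular)
    (hf : ∀ α < χlam.ord, ∀ i < κ.ord, f α i < (lam_ i).ord)
    (hfinc : ∀ α α', α < α' → α' < χlam.ord → {i | i < κ.ord ∧ f α i < f α' i} ∈ E)
    (hfcof : ∀ h : Ordinal.{0} → Ordinal.{0}, (∀ i < κ.ord, h i < (lam_ i).ord) →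
      ∃ α < χlam.ord, {i | i < κ.ord ∧ h i < f α i} ∈ E)
    (hg : ∀ β < χθ.ord, ∀ i < κ.ord, g β i < (θ i).ord)
    (hginc : ∀ β β', β < β' → β' < χθ.ord → {i | i < κ.ord ∧ g β i < g β' i} ∈ E)
    (hgcof : ∀ h : Ordinal.{0} → Ordinal.{0}, (∀ i < κ.ord, h i < (θ i).ord) →
      ∃ β < χθ.ord, {i | i < κ.ord ∧ h i < g β i} ∈ E) :
    ∀ X, X ⊆ Set.Iio lam.ord →
      ((∃ α < χlam.ord, ∃ β < χθ.ord, ∃ Y ∈ E, Bset lam_ A f g α β Y ⊆ X) ↔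
        {i | i < κ.ord ∧ X ∩ Set.Ico (lamlt lam_ i) ((lam_ i).ord) ∈ U i} ∈ E) := by
  intro X hX
  constructor
  · rintro ⟨α, hα, β, hβ, Y, hY, hB⟩
    have hYsub : Y ⊆ Set.Iio κ.ord := hE.1 Y hY
    refine hE.2.2.2.2.1 Y hY _ ?_ (fun i hi => hi.1)
    intro i hiY
    have hi : i < κ.ord := hYsub hiY
    have hUi := hU i hi
    refine ⟨hi, ?_⟩
    have hAm : A i (g β i) ∈ U i := hAmem i hi _ (hg β hβ i hi)
    set L : Set Ordinal.{0} :=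
      Set.Ico (lamlt lam_ i) ((lam_ i).ord) ∩ {ζ | ζ ≤ f α i} with hLdef
    have hfi : f α i < (lam_ i).ord := hf α hα i hi
    have hLnot : L ∉ U i := by
      intro hLU
      have hcard := hUuni i hi L hLU
      have h1 : f α i + 1 < (lam_ i).ord := by
        rw [Ordinal.add_one_eq_succ]
        exact (Cardinal.isSuccLimit_ord (hreg i hi).aleph0_le).succ_lt hfi
      have h2 : #L ≤ Cardinal.lift.{1,0} (f α i + 1).card := by
        rw [← Ordinal.mk_Iio_ordinal]
        refine Cardinal.mk_le_mk_of_subset ?_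
        intro ζ hζ
        have : ζ ≤ f α i := hζ.2
        show ζ < f α i + 1
        rw [Ordinal.add_one_eq_succ]
        exact Order.lt_succ_iff.2 this
      have h3 : #L < Cardinal.lift.{1,0} (lam_ i) :=
        h2.trans_lt (Cardinal.lift_lt.2 (Cardinal.lt_ord.1 h1))
      rw [hcard] at h3
      exact lt_irrefl _ h3
    have hTail : Set.Ico (lamlt lam_ i) ((lam_ i).ord) \ L ∈ U i := by
      rcases hUi.2.2.2.2.2 L Set.inter_subset_left with h | h
      · exact absurd h hLnot
      · exact h
    have hG : A i (g β i) ∩ (Set.Ico (lamlt lam_ i) ((lam_ i).ord) \ L) ∈ U i :=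
      hUi.2.2.2.1 _ hAm _ hTail
    refine hUi.2.2.2.2.1 _ hG _ ?_ Set.inter_subset_right
    rintro ζ ⟨hζA, hζIco, hζL⟩
    have hflt : f α i < ζ := by
      by_contra hcon
      exact hζL ⟨hζIco, not_lt.1 hcon⟩
    exact ⟨hB ⟨i, hiY, hζIco.1, hζIco.2, hζA, hflt⟩, hζIco⟩
  · intro hS
    classical
    have hθpos : ∀ i < κ.ord, (0 : Ordinal.{0}) < (θ i).ord := by
      intro i hi
      obtain ⟨a, ha, -⟩ := hAgen i hi _ (hU i hi).2.1
      exact lt_of_le_of_lt (zero_le (a := a)) ha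
    set h1 : Ordinal.{0} → Ordinal.{0} := fun i =>
      if hc : i < κ.ord ∧ X ∩ Set.Ico (lamlt lam_ i) ((lam_ i).ord) ∈ U i then
        Classical.choose (hAgen i hc.1 _ hc.2) else 0 with hh1def
    have hh1 : ∀ i < κ.ord, h1 i < (θ i).ord := by
      intro i hi
      by_cases hc : i < κ.ord ∧ X ∩ Set.Ico (lamlt lam_ i) ((lam_ i).ord) ∈ U i
      · rw [hh1def]; simp only [dif_pos hc]
        exact (Classical.choose_spec (hAgen i hc.1 _ hc.2)).1
      · rw [hh1def]; simp only [dif_neg hc]; exact hθpos i hi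
    obtain ⟨β, hβ, hZ1⟩ := hgcof h1 hh1
    have hgood : ∀ i, i < κ.ord → X ∩ Set.Ico (lamlt lam_ i) ((lam_ i).ord) ∈ U i →
        h1 i < g β i → cardLT (A i (g β i) \ X) (lam_ i) := by
      intro i hi hXU hlt1
      have hc : i < κ.ord ∧ X ∩ Set.Ico (lamlt lam_ i) ((lam_ i).ord) ∈ U i := ⟨hi, hXU⟩
      have hdef : h1 i = Classical.choose (hAgen i hc.1 _ hc.2) := by
        rw [hh1def]; simp only [dif_pos hc]
      have hspec := (Classical.choose_spec (hAgen i hc.1 _ hc.2)).2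
      rw [← hdef] at hspec
      have hsub : A i (g β i) \ X ⊆
          (A i (g β i) \ A i (h1 i)) ∪ (A i (h1 i) \ (X ∩ Set.Ico (lamlt lam_ i) ((lam_ i).ord))) := by
        intro ζ hζ
        by_cases hζA : ζ ∈ A i (h1 i)
        · exact Or.inr ⟨hζA, fun hmem => hζ.2 hmem.1⟩
        · exact Or.inl ⟨hζ.1, hζA⟩
      have hdec := hAdec i hi (h1 i) (g β i) hlt1 (hg β hβ i hi)
      unfold cardLT at hdec hspec ⊢
      refine lt_of_le_of_lt ((Cardinal.mk_le_mk_of_subset hsub).trans (Cardinal.mk_union_le _ _)) ?_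
      exact Cardinal.add_lt_of_lt
        (Cardinal.aleph0_le_lift.2 (hreg i hi).aleph0_le) hdec hspec
    set h2 : Ordinal.{0} → Ordinal.{0} := fun i =>
      if i < κ.ord ∧ g β i < (θ i).ord ∧ cardLT (A i (g β i) \ X) (lam_ i) then
        sSup (A i (g β i) \ X) else 0 with hh2def
    have hh2 : ∀ i < κ.ord, h2 i < (lam_ i).ord := by
      intro i hi
      by_cases hc : i < κ.ord ∧ g β i < (θ i).ord ∧ cardLT (A i (g β i) \ X) (lam_ i)
      · rw [hh2def]; simp only [if_pos hc]
        refine bdd_of_card_lt (hreg i hi) ?_ hc.2.2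
        intro ζ hζ
        exact (hAint i hi _ hc.2.1 hζ.1).2
      · rw [hh2def]; simp only [if_neg hc]
        rw [Cardinal.lt_ord]
        simpa using (hreg i hi).aleph0_le.trans_lt' Cardinal.aleph0_pos
    obtain ⟨α, hα, hZ2⟩ := hfcof h2 hh2
    refine ⟨α, hα, β, hβ,
      {i | i < κ.ord ∧ X ∩ Set.Ico (lamlt lam_ i) ((lam_ i).ord) ∈ U i} ∩
        ({i | i < κ.ord ∧ h1 i < g β i} ∩ {i | i < κ.ord ∧ h2 i < f α i}),
      hE.2.2.2.1 _ hS _ (hE.2.2.2.1 _ hZ1 _ hZ2), ?_⟩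
    rintro ζ ⟨i, ⟨⟨hiκ, hiU⟩, ⟨-, hiZ1⟩, ⟨-, hiZ2⟩⟩, hge, hltord, hζA, hflt⟩
    have hc : i < κ.ord ∧ g β i < (θ i).ord ∧ cardLT (A i (g β i) \ X) (lam_ i) :=
      ⟨hiκ, hg β hβ i hiκ, hgood i hiκ hiU hiZ1⟩
    have hdef : h2 i = sSup (A i (g β i) \ X) := by
      rw [hh2def]; simp only [if_pos hc]
    by_contra hζX
    have hmem : ζ ∈ A i (g β i) \ X := ⟨hζA, hζX⟩
    have hbdd : BddAbove (A i (g β i) \ X) := by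
      refine ⟨(lam_ i).ord, ?_⟩
      intro x hx
      exact le_of_lt (hAint i hiκ _ hc.2.1 hx.1).2
    have : ζ ≤ h2 i := hdef ▸ le_csSup hbdd hmem
    exact absurd (this.trans_lt (hiZ2.trans hflt)) (lt_irrefl ζ)
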